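/- Let A be a skew-symmetric 2n×2n matrix over a commutative ring with a_{ij}=0 whenever 1 ≤ i < j ≤ n or n+1 ≤ i < j ≤ 2n, and let B be the n×n matrix with b_{ij} = a_{i,j+n}. If I ⊆ [2n] is a balanced subset of even cardinality, then pf_{I,Ī}(A) = (−1)^{C(|I_1|,2)+C(|Ī_1|,2)} · Δ_{I_1,I_2}(B) · Δ_{Ī_1,Ī_2}(B), where I_1 = I ∩ [n], I_2 = {i−n : i ∈ I ∩ [n+1,2n]}, Ī_1 = Ī ∩ [n], Ī_2 = {i−n : i ∈ Ī ∩ [n+1,2n]}, and C(k,2) = k(k−1)/2. -/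

import Mathlib

open scoped Classical
noncomputable section

/-- The crossing number of a matching `π` (pairs written `(i,j)` with `i < j`): the number of
pairs `{i,j}, {k,l}` of `π` with `i < k < j < l`. -/
def crossNum (π : Finset (ℕ × ℕ)) : ℕ :=
  ((π ×ˢ π).filter fun pq => pq.1.1 < pq.2.1 ∧ pq.2.1 < pq.1.2 ∧ pq.1.2 < pq.2.2).card

/-- `π` is a perfect matching of the finite set `I`: a set of pairs `(i,j)`, `i < j`, with all
endpoints in `I`, pairwise disjoint, covering every element of `I`. -/
def IsPM (I : Finset ℕ) (π : Finset (ℕ × ℕ)) : Prop :=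
  (∀ p ∈ π, p.1 ∈ I ∧ p.2 ∈ I ∧ p.1 < p.2) ∧
  (∀ p ∈ π, ∀ q ∈ π, p ≠ q → p.1 ≠ q.1 ∧ p.1 ≠ q.2 ∧ p.2 ≠ q.1 ∧ p.2 ≠ q.2) ∧
  (∀ k ∈ I, ∃ p ∈ π, k = p.1 ∨ k = p.2)

/-- `pf_I(A)`: the Pfaffian of the submatrix of `A` on rows and columns indexed by `I`,
`pf_I(A) = Σ_π ε(π) Π_{(i,j) ∈ π} a_{ij}` over perfect matchings `π` of `I`
(equal to `1` when `I = ∅`). -/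
def pfSub {R : Type*} [CommRing R] (A : ℕ → ℕ → R) (I : Finset ℕ) : R :=
  ∑ π ∈ (I ×ˢ I).powerset.filter (fun π => IsPM I π),
    (-1 : R) ^ crossNum π * ∏ p ∈ π, A p.1 p.2


/-- The minor `Δ_{S,T}(B)` of `B` on the rows indexed by `S` and columns indexed by `T`,
both taken in increasing order (meaningful when `|S| = |T|`). -/
def minor {R : Type*} [CommRing R] (B : ℕ → ℕ → R) (S T : Finset ℕ) : R :=
  Matrix.det (Matrix.of fun i j : Fin S.card =>
    B ((S.sort (· ≤ ·)).getD i 0) ((T.sort (· ≤ ·)).getD j 0))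

section Helpers
open Finset

lemma card_pairs (k : ℕ) :
    ((Finset.univ : Finset (Fin k × Fin k)).filter fun p => p.1 < p.2).card = k.choose 2 := by
  rw [Finset.card_eq_sum_card_fiberwise (f := Prod.snd) (t := Finset.univ) (fun x _ => mem_univ _)]
  have h1 : ∀ j : Fin k, ((Finset.univ : Finset (Fin k × Fin k)).filter
      fun p => p.1 < p.2 ∧ p.2 = j).card = (j : ℕ) := by
    intro j
    rw [show ((Finset.univ : Finset (Fin k × Fin k)).filter fun p => p.1 < p.2 ∧ p.2 = j)
        = (Finset.Iio j).image (fun i => (i, j)) by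
      ext p
      simp only [mem_filter, mem_univ, true_and, mem_image, mem_Iio]
      constructor
      · rintro ⟨h1, h2⟩; exact ⟨p.1, h2 ▸ h1, by rw [← h2]⟩
      · rintro ⟨i, hi, rfl⟩; exact ⟨hi, rfl⟩]
    rw [Finset.card_image_of_injective _ (fun a b h => (Prod.mk.injEq _ _ _ _).mp h |>.1)]
    simp
  calc ∑ j : Fin k, (((Finset.univ : Finset (Fin k × Fin k)).filter
          fun p => p.1 < p.2).filter fun p => p.2 = j).card
      = ∑ j : Fin k, (j : ℕ) := by
        refine Finset.sum_congr rfl fun j _ => ?_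
        rw [Finset.filter_filter]; exact h1 j
    _ = ∑ j ∈ Finset.range k, j := Fin.sum_univ_eq_sum_range (fun i => i) k
    _ = k.choose 2 := by
        rw [Finset.sum_range_id, Nat.choose_two_right]

lemma my_sign_eq_signAux {k : ℕ} (σ : Equiv.Perm (Fin k)) :
    Equiv.Perm.sign σ = Equiv.Perm.signAux σ := by
  refine Equiv.Perm.swap_induction_on σ (by simp) ?_
  intro f x y hxy ih
  rw [Equiv.Perm.sign_mul, Equiv.Perm.signAux_mul, ih, Equiv.Perm.sign_swap hxy,
    Equiv.Perm.signAux_swap hxy]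

/-- number of inversions -/
def invCount {k : ℕ} (σ : Equiv.Perm (Fin k)) : ℕ :=
  ((Finset.univ : Finset (Fin k × Fin k)).filter fun p => p.1 < p.2 ∧ σ p.2 < σ p.1).card

lemma my_sign_eq_pow {k : ℕ} (σ : Equiv.Perm (Fin k)) :
    Equiv.Perm.sign σ = (-1 : ℤˣ) ^ invCount σ := by
  rw [my_sign_eq_signAux]
  unfold Equiv.Perm.signAux
  rw [Finset.prod_ite, Finset.prod_const, Finset.prod_const_one, mul_one]
  congr 1
  apply Finset.card_nbij' (fun x => (x.2, x.1)) (fun p => ⟨p.2, p.1⟩)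
  · intro a ha
    simp only [Finset.mem_coe, Finset.mem_filter, Equiv.Perm.mem_finPairsLT] at ha
    simp only [Finset.mem_coe, Finset.mem_filter, Finset.mem_univ, true_and]
    exact ⟨ha.1, lt_of_le_of_ne ha.2 (fun h => absurd (σ.injective h) (ne_of_gt ha.1))⟩
  · intro p hp
    simp only [Finset.mem_coe, Finset.mem_filter, Finset.mem_univ, true_and] at hp
    simp only [Finset.mem_coe, Finset.mem_filter, Equiv.Perm.mem_finPairsLT]
    exact ⟨hp.1, le_of_lt hp.2⟩
  · intro a _; rfl
  · intro p _; rfl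

lemma cross_add_inv {k : ℕ} (σ : Equiv.Perm (Fin k)) :
    ((Finset.univ : Finset (Fin k × Fin k)).filter fun p => p.1 < p.2 ∧ σ p.1 < σ p.2).card
      + invCount σ = k.choose 2 := by
  rw [← card_pairs k]
  have h1 : ((Finset.univ : Finset (Fin k × Fin k)).filter fun p => p.1 < p.2 ∧ σ p.1 < σ p.2)
      = ((Finset.univ : Finset (Fin k × Fin k)).filter fun p => p.1 < p.2).filter
        (fun p => σ p.1 < σ p.2) := by
    rw [Finset.filter_filter]
  have h2 : ((Finset.univ : Finset (Fin k × Fin k)).filter fun p => p.1 < p.2 ∧ σ p.2 < σ p.1)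
      = ((Finset.univ : Finset (Fin k × Fin k)).filter fun p => p.1 < p.2).filter
        (fun p => ¬ σ p.1 < σ p.2) := by
    rw [Finset.filter_filter]
    apply Finset.filter_congr
    intro p _
    constructor
    · rintro ⟨h, h'⟩; exact ⟨h, not_lt_of_gt h'⟩
    · rintro ⟨h, h'⟩
      refine ⟨h, lt_of_le_of_ne (not_lt.mp h') ?_⟩
      intro heq; exact absurd (σ.injective heq) (ne_of_gt h)
  rw [invCount, h1, h2]
  exact Finset.card_filter_add_card_filter_not _

end Helpers

lemma pf_balanced {R : Type*} [CommRing R] (n : ℕ) (A : ℕ → ℕ → R)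
    (hzero1 : ∀ i j, 1 ≤ i → i < j → j ≤ n → A i j = 0)
    (hzero2 : ∀ i j, n + 1 ≤ i → i < j → j ≤ 2 * n → A i j = 0)
    (B : ℕ → ℕ → R) (hB : ∀ i j, B i j = A i (j + n))
    (J : Finset ℕ) (hJ : J ⊆ Finset.Icc 1 (2 * n))
    (hbal : (J.filter (fun i => i ≤ n)).card * 2 = J.card) :
    pfSub A J = (-1 : R) ^ (Nat.choose (J.filter (fun i => i ≤ n)).card 2) *
      minor B (J.filter (fun i => i ≤ n)) ((J.filter (fun i => n < i)).image (fun i => i - n)) := by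
  classical
  set S : Finset ℕ := J.filter (fun i => i ≤ n) with hSdef
  set T0 : Finset ℕ := J.filter (fun i => n < i) with hT0def
  set k : ℕ := S.card with hkdef
  -- cardinalities
  have hT0eq : T0 = J.filter (fun i => ¬ i ≤ n) := by
    rw [hT0def]; apply Finset.filter_congr; intro x _; simp [not_le]
  have hcards : S.card + T0.card = J.card := by
    rw [hT0eq, hSdef]; exact Finset.card_filter_add_card_filter_not _
  have hTcard : T0.card = k := by omega
  -- sorted lists
  set s : List ℕ := S.sort (· ≤ ·) with hsdef
  set t : List ℕ := T0.sort (· ≤ ·) with htdef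
  have hslen : s.length = k := Finset.length_sort _
  have htlen : t.length = k := by rw [htdef, Finset.length_sort, hTcard]
  set sv : Fin k → ℕ := fun i => s.getD i 0 with hsvdef
  set tv : Fin k → ℕ := fun i => t.getD i 0 with htvdef
  have hsv_get : ∀ i : Fin k, sv i = s.get ⟨i, by rw [hslen]; exact i.isLt⟩ := by
    intro i; exact List.getD_eq_get _ _ ⟨i, by rw [hslen]; exact i.isLt⟩
  have htv_get : ∀ i : Fin k, tv i = t.get ⟨i, by rw [htlen]; exact i.isLt⟩ := by
    intro i; exact List.getD_eq_get _ _ ⟨i, by rw [htlen]; exact i.isLt⟩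
  have hsv_mem : ∀ i, sv i ∈ S := by
    intro i; rw [hsv_get]
    exact Finset.mem_sort (α := ℕ) (· ≤ ·) |>.mp (List.get_mem _ _)
  have htv_mem : ∀ i, tv i ∈ T0 := by
    intro i; rw [htv_get]
    exact Finset.mem_sort (α := ℕ) (· ≤ ·) |>.mp (List.get_mem _ _)
  have hsv_mono : StrictMono sv := by
    intro a b hab
    rw [hsv_get, hsv_get]
    exact (Finset.sortedLT_sort S).strictMono_get (by exact hab)
  have htv_mono : StrictMono tv := by
    intro a b hab
    rw [htv_get, htv_get]
    exact (Finset.sortedLT_sort T0).strictMono_get (by exact hab)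
  have hsv_surj : ∀ x ∈ S, ∃ i, sv i = x := by
    intro x hx
    obtain ⟨⟨j, hj⟩, hget⟩ := List.mem_iff_get.mp (Finset.mem_sort (α := ℕ) (· ≤ ·) |>.mpr hx)
    refine ⟨⟨j, by rw [← hslen]; exact hj⟩, ?_⟩
    rw [hsv_get]; exact hget
  have htv_surj : ∀ x ∈ T0, ∃ i, tv i = x := by
    intro x hx
    obtain ⟨⟨j, hj⟩, hget⟩ := List.mem_iff_get.mp (Finset.mem_sort (α := ℕ) (· ≤ ·) |>.mpr hx)
    refine ⟨⟨j, by rw [← htlen]; exact hj⟩, ?_⟩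
    rw [htv_get]; exact hget
  have hsv_le : ∀ i, sv i ≤ n := fun i => (Finset.mem_filter.mp (hsv_mem i)).2
  have hsv_J : ∀ i, sv i ∈ J := fun i => (Finset.mem_filter.mp (hsv_mem i)).1
  have htv_gt : ∀ i, n < tv i := fun i => (Finset.mem_filter.mp (htv_mem i)).2
  have htv_J : ∀ i, tv i ∈ J := fun i => (Finset.mem_filter.mp (htv_mem i)).1
  have hJ1 : ∀ x ∈ J, 1 ≤ x := fun x hx => (Finset.mem_Icc.mp (hJ hx)).1
  have hJ2 : ∀ x ∈ J, x ≤ 2 * n := fun x hx => (Finset.mem_Icc.mp (hJ hx)).2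
  -- transversality
  set Tr : Finset (ℕ × ℕ) → Prop := fun π => ∀ p ∈ π, p.1 ≤ n ∧ n < p.2 with hTrdef
  -- Step 1
  have hstep1 : pfSub A J =
      ∑ π ∈ (J ×ˢ J).powerset.filter (fun π => IsPM J π ∧ Tr π),
        (-1 : R) ^ crossNum π * ∏ p ∈ π, A p.1 p.2 := by
    rw [pfSub, show (J ×ˢ J).powerset.filter (fun π => IsPM J π ∧ Tr π)
        = ((J ×ˢ J).powerset.filter (fun π => IsPM J π)).filter Tr from by
      rw [Finset.filter_filter]]
    symm
    apply Finset.sum_filter_of_ne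
    intro π hπ hne
    obtain ⟨-, hPM⟩ := Finset.mem_filter.mp hπ
    by_contra hnt
    apply hne
    simp only [hTrdef, not_forall] at hnt
    obtain ⟨p, hp, hcond⟩ := hnt
    obtain ⟨h1, h2, h3⟩ := hPM.1 p hp
    have hA : A p.1 p.2 = 0 := by
      by_cases hle : p.2 ≤ n
      · exact hzero1 p.1 p.2 (hJ1 _ h1) h3 hle
      · push_neg at hle
        have hp1 : ¬ p.1 ≤ n := fun h => hcond ⟨h, hle⟩
        push_neg at hp1
        exact hzero2 p.1 p.2 hp1 h3 (hJ2 _ h2)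
    rw [Finset.prod_eq_zero hp hA, mul_zero]
  -- the matching associated to a permutation
  set mπ : Equiv.Perm (Fin k) → Finset (ℕ × ℕ) :=
    fun σ => Finset.univ.image fun i => (sv i, tv (σ i)) with hmπdef
  have hmem_iff : ∀ σ p, p ∈ mπ σ ↔ ∃ i, (sv i, tv (σ i)) = p := by
    intro σ p; simp [hmπdef]
  have hsvtv_ne : ∀ i j, sv i ≠ tv j := fun i j h =>
    absurd (h ▸ htv_gt j) (not_lt.mpr (hsv_le i))
  have hPMm : ∀ σ, IsPM J (mπ σ) := by
    intro σ
    refine ⟨?_, ?_, ?_⟩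
    · intro p hp
      obtain ⟨i, rfl⟩ := (hmem_iff σ p).mp hp
      exact ⟨hsv_J i, htv_J _, lt_of_le_of_lt (hsv_le i) (htv_gt _)⟩
    · intro p hp q hq hpq
      obtain ⟨i, rfl⟩ := (hmem_iff σ p).mp hp
      obtain ⟨j, rfl⟩ := (hmem_iff σ q).mp hq
      have hij : i ≠ j := fun h => hpq (by rw [h])
      exact ⟨fun h => hij (hsv_mono.injective h), hsvtv_ne i (σ j),
        fun h => hsvtv_ne j (σ i) h.symm,
        fun h => hij (σ.injective (htv_mono.injective h))⟩
    · intro x hx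
      by_cases hle : x ≤ n
      · obtain ⟨i, hi⟩ := hsv_surj x (Finset.mem_filter.mpr ⟨hx, hle⟩)
        exact ⟨(sv i, tv (σ i)), (hmem_iff σ _).mpr ⟨i, rfl⟩, Or.inl hi.symm⟩
      · push_neg at hle
        obtain ⟨j, hj⟩ := htv_surj x (Finset.mem_filter.mpr ⟨hx, hle⟩)
        refine ⟨(sv (σ.symm j), tv (σ (σ.symm j))), (hmem_iff σ _).mpr ⟨σ.symm j, rfl⟩, Or.inr ?_⟩
        rw [σ.apply_symm_apply, hj]
  have hTrm : ∀ σ, Tr (mπ σ) := by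
    intro σ p hp
    obtain ⟨i, rfl⟩ := (hmem_iff σ p).mp hp
    exact ⟨hsv_le i, htv_gt _⟩
  have hsubm : ∀ σ, mπ σ ∈ (J ×ˢ J).powerset := by
    intro σ
    rw [Finset.mem_powerset]
    intro p hp
    obtain ⟨i, rfl⟩ := (hmem_iff σ p).mp hp
    exact Finset.mem_product.mpr ⟨hsv_J i, htv_J _⟩
  -- crossing number
  have hcn : ∀ σ, crossNum (mπ σ) =
      ((Finset.univ : Finset (Fin k × Fin k)).filter fun p => p.1 < p.2 ∧ σ p.1 < σ p.2).card := by
    intro σ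
    rw [crossNum]
    symm
    apply Finset.card_bij (fun p _ => ((sv p.1, tv (σ p.1)), (sv p.2, tv (σ p.2))))
    · intro p hp
      obtain ⟨-, h1, h2⟩ := Finset.mem_filter.mp hp
      refine Finset.mem_filter.mpr ⟨Finset.mem_product.mpr
        ⟨(hmem_iff σ _).mpr ⟨p.1, rfl⟩, (hmem_iff σ _).mpr ⟨p.2, rfl⟩⟩, ?_, ?_, ?_⟩
      · exact hsv_mono h1
      · exact lt_of_le_of_lt (hsv_le p.2) (htv_gt _)
      · exact htv_mono h2
    · intro p hp q hq h
      have h1 : sv p.1 = sv q.1 := congrArg (fun x => x.1.1) h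
      have h2 : sv p.2 = sv q.2 := congrArg (fun x => x.2.1) h
      exact Prod.ext (hsv_mono.injective h1) (hsv_mono.injective h2)
    · intro b hb
      obtain ⟨hbmem, hb1, hb2, hb3⟩ := Finset.mem_filter.mp hb
      obtain ⟨hbp, hbq⟩ := Finset.mem_product.mp hbmem
      obtain ⟨i, hi⟩ := (hmem_iff σ _).mp hbp
      obtain ⟨j, hj⟩ := (hmem_iff σ _).mp hbq
      refine ⟨(i, j), Finset.mem_filter.mpr ⟨Finset.mem_univ _, ?_, ?_⟩, ?_⟩
      · apply hsv_mono.lt_iff_lt.mp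
        rw [show sv i = b.1.1 from congrArg Prod.fst hi, show sv j = b.2.1 from congrArg Prod.fst hj]
        exact hb1
      · apply htv_mono.lt_iff_lt.mp
        rw [show tv (σ i) = b.1.2 from congrArg Prod.snd hi,
          show tv (σ j) = b.2.2 from congrArg Prod.snd hj]
        exact hb3
      · rw [hi, hj]
  -- product
  have hprod : ∀ σ, ∏ p ∈ mπ σ, A p.1 p.2 = ∏ i : Fin k, B (sv i) (tv (σ i) - n) := by
    intro σ
    rw [hmπdef]
    rw [Finset.prod_image (fun i _ j _ h => hsv_mono.injective (congrArg Prod.fst h))]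
    refine Finset.prod_congr rfl fun i _ => ?_
    rw [hB]
    congr 1
    exact (Nat.sub_add_cancel (le_of_lt (htv_gt _))).symm
  -- sign
  have hsignR : ∀ σ : Equiv.Perm (Fin k), ((Equiv.Perm.sign σ : ℤ) : R) = (-1 : R) ^ invCount σ := by
    intro σ
    rw [my_sign_eq_pow]
    push_cast
    rfl
  have hsign : ∀ σ : Equiv.Perm (Fin k), ((-1 : R) ^ crossNum (mπ σ)) =
      (-1 : R) ^ (k.choose 2) * ((Equiv.Perm.sign σ : ℤ) : R) := by
    intro σ
    have h1 : crossNum (mπ σ) + invCount σ = k.choose 2 := by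
      rw [hcn]; exact cross_add_inv σ
    have h11 : (-1 : R) ^ invCount σ * (-1 : R) ^ invCount σ = 1 := by
      rw [← pow_add, ← two_mul, pow_mul, neg_one_sq, one_pow]
    calc (-1 : R) ^ crossNum (mπ σ)
        = (-1 : R) ^ crossNum (mπ σ) * ((-1 : R) ^ invCount σ * (-1 : R) ^ invCount σ) := by
          rw [h11, mul_one]
      _ = ((-1 : R) ^ crossNum (mπ σ) * (-1 : R) ^ invCount σ) * (-1 : R) ^ invCount σ := by ring
      _ = (-1 : R) ^ (crossNum (mπ σ) + invCount σ) * (-1 : R) ^ invCount σ := by rw [pow_add]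
      _ = (-1 : R) ^ (k.choose 2) * ((Equiv.Perm.sign σ : ℤ) : R) := by rw [h1, hsignR]
  -- Step 2: bijection with permutations
  have hstep2 : ∑ π ∈ (J ×ˢ J).powerset.filter (fun π => IsPM J π ∧ Tr π),
        (-1 : R) ^ crossNum π * ∏ p ∈ π, A p.1 p.2
      = ∑ σ : Equiv.Perm (Fin k),
          (-1 : R) ^ (k.choose 2) * ((Equiv.Perm.sign σ : ℤ) : R) *
            ∏ i : Fin k, B (sv i) (tv (σ i) - n) := by
    symm
    apply Finset.sum_bij (fun σ _ => mπ σ)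
    · intro σ _
      exact Finset.mem_filter.mpr ⟨hsubm σ, hPMm σ, hTrm σ⟩
    · intro σ _ τ _ h
      apply Equiv.ext
      intro i
      have : (sv i, tv (σ i)) ∈ mπ τ := h ▸ (hmem_iff σ _).mpr ⟨i, rfl⟩
      obtain ⟨j, hj⟩ := (hmem_iff τ _).mp this
      have hji : j = i := hsv_mono.injective (congrArg Prod.fst hj)
      have := congrArg Prod.snd hj
      rw [hji] at this
      exact (htv_mono.injective this).symm
    · intro π hπ
      obtain ⟨hsub, hPMπ, hTrπ⟩ := Finset.mem_filter.mp hπ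
      have hpartner : ∀ i : Fin k, ∃ p ∈ π, p.1 = sv i := by
        intro i
        obtain ⟨p, hp, hcase⟩ := hPMπ.2.2 (sv i) (hsv_J i)
        rcases hcase with h | h
        · exact ⟨p, hp, h.symm⟩
        · exact absurd ((hTrπ p hp).2) (by rw [← h]; exact not_lt.mpr (hsv_le i))
      choose pf hpf1 hpf2 using hpartner
      have hp2 : ∀ i, ∃ j : Fin k, tv j = (pf i).2 := by
        intro i
        apply htv_surj
        exact Finset.mem_filter.mpr ⟨(hPMπ.1 _ (hpf1 i)).2.1, (hTrπ _ (hpf1 i)).2⟩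
      choose f hf using hp2
      have hfinj : Function.Injective f := by
        intro i i' h
        have h2 : (pf i).2 = (pf i').2 := by rw [← hf, ← hf, h]
        have hpp : pf i = pf i' := by
          by_contra hne
          exact (hPMπ.2.1 _ (hpf1 i) _ (hpf1 i') hne).2.2.2 h2
        exact hsv_mono.injective (by rw [← hpf2, ← hpf2, hpp])
      refine ⟨Equiv.ofBijective f ((Finite.injective_iff_bijective).mp hfinj), Finset.mem_univ _, ?_⟩
      apply Finset.Subset.antisymm
      · intro p hp
        obtain ⟨i, hi⟩ := (hmem_iff _ _).mp hp
        have : (sv i, tv (f i)) = pf i := by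
          apply Prod.ext
          · exact (hpf2 i).symm
          · exact hf i
        rw [← hi]
        show (sv i, tv (Equiv.ofBijective f _ i)) ∈ π
        rw [show Equiv.ofBijective f ((Finite.injective_iff_bijective).mp hfinj) i = f i from rfl,
          this]
        exact hpf1 i
      · intro p hp
        have hp1S : p.1 ∈ S := Finset.mem_filter.mpr ⟨(hPMπ.1 p hp).1, (hTrπ p hp).1⟩
        obtain ⟨i, hi⟩ := hsv_surj p.1 hp1S
        have hpeq : p = pf i := by
          by_contra hne
          exact (hPMπ.2.1 _ hp _ (hpf1 i) hne).1 (by rw [← hi, hpf2])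
        apply (hmem_iff _ _).mpr
        refine ⟨i, ?_⟩
        rw [show Equiv.ofBijective f ((Finite.injective_iff_bijective).mp hfinj) i = f i from rfl]
        rw [hpeq]
        apply Prod.ext
        · exact (hpf2 i).symm
        · exact hf i
    · intro σ _
      rw [hsign, hprod]
  -- Step 3: the minor
  have hstep3 : minor B S (T0.image (fun i => i - n)) =
      ∑ σ : Equiv.Perm (Fin k), ((Equiv.Perm.sign σ : ℤ) : R) *
        ∏ i : Fin k, B (sv i) (tv (σ i) - n) := by
    have hts : (T0.image (fun i => i - n)).sort (· ≤ ·) = t.map (fun x => x - n) := by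
      refine (fun h1 h2 => List.Perm.eq_of_pairwise' (Finset.pairwise_sort _ _) h2 h1) ?_ ?_
      · apply List.perm_of_nodup_nodup_toFinset_eq (Finset.sort_nodup _ _)
        · apply List.Nodup.map_on ?_ (Finset.sort_nodup _ _)
          intro x hx y hy hxy
          have hx' : n < x := (Finset.mem_filter.mp (Finset.mem_sort (α := ℕ) (· ≤ ·) |>.mp hx)).2
          have hy' : n < y := (Finset.mem_filter.mp (Finset.mem_sort (α := ℕ) (· ≤ ·) |>.mp hy)).2
          omega
        · ext x
          simp only [Finset.sort_toFinset, List.mem_toFinset, List.mem_map, Finset.mem_image]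
          constructor
          · rintro ⟨a, ha, rfl⟩
            exact ⟨a, Finset.mem_sort (α := ℕ) (· ≤ ·) |>.mpr ha, rfl⟩
          · rintro ⟨a, ha, rfl⟩
            exact ⟨a, Finset.mem_sort (α := ℕ) (· ≤ ·) |>.mp ha, rfl⟩
      · apply List.Pairwise.map
        · intro a b hab
          exact Nat.sub_le_sub_right hab n
        · exact Finset.pairwise_sort _ _
    have hmaplen : (t.map (fun x => x - n)).length = k := by
      rw [List.length_map, htlen]
    rw [minor, ← Matrix.det_transpose, Matrix.det_apply']
    refine Finset.sum_congr rfl fun σ _ => ?_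
    congr 1
    refine Finset.prod_congr rfl fun i _ => ?_
    simp only [Matrix.transpose_apply, Matrix.of_apply]
    congr 1
    rw [hts, List.getD_eq_getElem _ _ (by rw [hmaplen]; exact (σ i).isLt), List.getElem_map, htv_get, List.get_eq_getElem]
  rw [hstep1, hstep2, hstep3, Finset.mul_sum]
  refine Finset.sum_congr rfl fun σ _ => ?_
  ring

/-- For a skew-symmetric `2n × 2n` matrix `A` vanishing on `1 ≤ i < j ≤ n` and on
`n+1 ≤ i < j ≤ 2n`, with `B` the `n × n` matrix `b_{ij} = a_{i,j+n}`, and `I ⊆ [2n]` balanced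
of even cardinality:
`pf_{I,Ī}(A) = (−1)^{C(|I₁|,2)+C(|Ī₁|,2)} Δ_{I₁,I₂}(B) Δ_{Ī₁,Ī₂}(B)`,
where `I₁ = I ∩ [n]`, `I₂ = {i−n : i ∈ I ∩ [n+1,2n]}` and similarly for `Ī = [2n] ∖ I`. -/
theorem pfPair_eq_minors {R : Type*} [CommRing R] (n : ℕ) (A : ℕ → ℕ → R)
    (hskew : ∀ i j, A i j = -A j i)
    (hzero1 : ∀ i j, 1 ≤ i → i < j → j ≤ n → A i j = 0)
    (hzero2 : ∀ i j, n + 1 ≤ i → i < j → j ≤ 2 * n → A i j = 0)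
    (B : ℕ → ℕ → R) (hB : ∀ i j, B i j = A i (j + n))
    (I : Finset ℕ) (hI : I ⊆ Finset.Icc 1 (2 * n)) (heven : Even I.card)
    (hbal : (I.filter (fun i => i ≤ n)).card * 2 = I.card) :
    pfSub A I * pfSub A (Finset.Icc 1 (2 * n) \ I) =
      (-1 : R) ^ (Nat.choose (I.filter (fun i => i ≤ n)).card 2 +
          Nat.choose ((Finset.Icc 1 (2 * n) \ I).filter (fun i => i ≤ n)).card 2) *
        minor B (I.filter (fun i => i ≤ n))
          ((I.filter (fun i => n < i)).image (fun i => i - n)) *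
        minor B ((Finset.Icc 1 (2 * n) \ I).filter (fun i => i ≤ n))
          (((Finset.Icc 1 (2 * n) \ I).filter (fun i => n < i)).image (fun i => i - n)) := by
  classical
  set K : Finset ℕ := Finset.Icc 1 (2 * n) with hKdef
  have hIc_sub : K \ I ⊆ K := Finset.sdiff_subset
  have hKfilter : K.filter (fun i => i ≤ n) = Finset.Icc 1 n := by
    ext x
    simp only [hKdef, Finset.mem_filter, Finset.mem_Icc]
    omega
  have hKcard : K.card = 2 * n := by
    rw [hKdef, Nat.card_Icc]
    omega
  have hfs : (K \ I).filter (fun i => i ≤ n)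
      = K.filter (fun i => i ≤ n) \ I.filter (fun i => i ≤ n) := by
    ext x
    simp only [Finset.mem_filter, Finset.mem_sdiff]
    tauto
  have hsub2 : I.filter (fun i => i ≤ n) ⊆ K.filter (fun i => i ≤ n) :=
    Finset.filter_subset_filter _ hI
  have hk_le : (I.filter (fun i => i ≤ n)).card ≤ n := by
    have := Finset.card_le_card hsub2
    rwa [hKfilter, Nat.card_Icc, Nat.add_sub_cancel] at this
  have hIcard_le : I.card ≤ 2 * n := by
    have := Finset.card_le_card hI
    rwa [hKcard] at this
  have hc1 : ((K \ I).filter (fun i => i ≤ n)).card = n - (I.filter (fun i => i ≤ n)).card := by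
    rw [hfs, Finset.card_sdiff_of_subset hsub2, hKfilter, Nat.card_Icc, Nat.add_sub_cancel]
  have hc2 : (K \ I).card = 2 * n - I.card := by
    rw [Finset.card_sdiff_of_subset hI, hKcard]
  have hIc_bal : ((K \ I).filter (fun i => i ≤ n)).card * 2 = (K \ I).card := by
    rw [hc1, hc2]
    omega
  rw [pf_balanced n A hzero1 hzero2 B hB I hI hbal,
    pf_balanced n A hzero1 hzero2 B hB (K \ I) hIc_sub hIc_bal, pow_add]
  ring
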